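/- Let m1, m2, m3, m4, m5, n1, n2, n3, n4, n5 be real numbers. For τ2 ≥ 0 and ξ ∈ ℂ define ψ(ξ, τ2) = ξ⁵ + m1·ξ⁴ + m2·ξ³ + m3·ξ² + m4·ξ + m5 + e^{−ξτ2}·(n1·ξ⁴ + n2·ξ³ + n3·ξ² + n4·ξ + n5). Assume: (i) every ξ ∈ ℂ with ψ(ξ, 0) = 0 satisfies Re ξ < 0; (ii) m5 + n5 ≠ 0; and (iii) T > 0 is such that for all τ ∈ [0, T) and all ω > 0 one has ψ(iω, τ) ≠ 0. Then for every τ ∈ [0, T), every ξ ∈ ℂ with ψ(ξ, τ) = 0 satisfies Re ξ < 0. -/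

import Mathlib

open Complex Metric Set Filter Topology

noncomputable def auxP (n1 n2 n3 n4 n5 : ℝ) (ξ : ℂ) : ℂ :=
  (n1 : ℂ) * ξ ^ 4 + (n2 : ℂ) * ξ ^ 3 + (n3 : ℂ) * ξ ^ 2 + (n4 : ℂ) * ξ + (n5 : ℂ)

noncomputable def auxF (m1 m2 m3 m4 m5 n1 n2 n3 n4 n5 : ℝ) (τ : ℝ) (ξ : ℂ) : ℂ :=
  ξ ^ 5 + (m1 : ℂ) * ξ ^ 4 + (m2 : ℂ) * ξ ^ 3 + (m3 : ℂ) * ξ ^ 2 +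
    (m4 : ℂ) * ξ + (m5 : ℂ) +
    Complex.exp (-ξ * (τ : ℂ)) * auxP n1 n2 n3 n4 n5 ξ

section aux

variable (m1 m2 m3 m4 m5 n1 n2 n3 n4 n5 : ℝ)

lemma auxF_diff (τ : ℝ) : Differentiable ℂ (auxF m1 m2 m3 m4 m5 n1 n2 n3 n4 n5 τ) := by
  unfold auxF auxP
  fun_prop

lemma auxF_cont :
    Continuous (fun p : ℂ × ℝ => auxF m1 m2 m3 m4 m5 n1 n2 n3 n4 n5 p.2 p.1) := by
  unfold auxF auxP
  fun_prop

lemma auxF_conj (τ : ℝ) (ξ : ℂ) :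
    auxF m1 m2 m3 m4 m5 n1 n2 n3 n4 n5 τ (starRingEnd ℂ ξ) =
      starRingEnd ℂ (auxF m1 m2 m3 m4 m5 n1 n2 n3 n4 n5 τ ξ) := by
  unfold auxF auxP
  have he : Complex.exp (-(starRingEnd ℂ ξ * (τ : ℂ))) =
      starRingEnd ℂ (Complex.exp (-(ξ * (τ : ℂ)))) := by
    rw [← Complex.exp_conj]
    congr 1
    simp [map_mul, Complex.conj_ofReal]
  simp only [neg_mul, map_add, map_mul, map_pow, Complex.conj_ofReal, he]

lemma auxF_bound {τ : ℝ} {ξ : ℂ} (hτ : 0 ≤ τ) (hre : 0 ≤ ξ.re)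
    (hroot : auxF m1 m2 m3 m4 m5 n1 n2 n3 n4 n5 τ ξ = 0) :
    ‖ξ‖ ≤ 1 + (|m1| + |m2| + |m3| + |m4| + |m5| + |n1| + |n2| + |n3| + |n4| + |n5|) := by
  set MM := 1 + (|m1| + |m2| + |m3| + |m4| + |m5| + |n1| + |n2| + |n3| + |n4| + |n5|) with hMM
  by_contra hc
  push_neg at hc
  set a := ‖ξ‖ with ha
  have hM1 : (1:ℝ) ≤ MM := by
    have := abs_nonneg m1; have := abs_nonneg m2; have := abs_nonneg m3
    have := abs_nonneg m4; have := abs_nonneg m5; have := abs_nonneg n1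
    have := abs_nonneg n2; have := abs_nonneg n3; have := abs_nonneg n4
    have := abs_nonneg n5
    rw [hMM]; linarith
  have ha1 : (1:ℝ) ≤ a := le_of_lt (lt_of_le_of_lt hM1 hc)
  have hE : ‖Complex.exp (-ξ * (τ : ℂ))‖ ≤ 1 := by
    rw [Complex.norm_exp]
    rw [Real.exp_le_one_iff]
    have : (-ξ * (τ : ℂ)).re = -(ξ.re * τ) := by simp
    rw [this]
    exact neg_nonpos.2 (mul_nonneg hre hτ)
  unfold auxF auxP at hroot
  have h5 : ξ ^ 5 = -((m1 : ℂ) * ξ ^ 4 + (m2 : ℂ) * ξ ^ 3 + (m3 : ℂ) * ξ ^ 2 +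
      (m4 : ℂ) * ξ + (m5 : ℂ) +
      Complex.exp (-ξ * (τ : ℂ)) *
        ((n1 : ℂ) * ξ ^ 4 + (n2 : ℂ) * ξ ^ 3 + (n3 : ℂ) * ξ ^ 2 + (n4 : ℂ) * ξ + (n5 : ℂ))) := by
    linear_combination hroot
  have hPn : ‖(n1 : ℂ) * ξ ^ 4 + (n2 : ℂ) * ξ ^ 3 + (n3 : ℂ) * ξ ^ 2 + (n4 : ℂ) * ξ + (n5 : ℂ)‖
      ≤ |n1| * a ^ 4 + |n2| * a ^ 3 + |n3| * a ^ 2 + |n4| * a + |n5| := by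
    calc ‖(n1 : ℂ) * ξ ^ 4 + (n2 : ℂ) * ξ ^ 3 + (n3 : ℂ) * ξ ^ 2 + (n4 : ℂ) * ξ + (n5 : ℂ)‖
        ≤ ‖(n1 : ℂ) * ξ ^ 4 + (n2 : ℂ) * ξ ^ 3 + (n3 : ℂ) * ξ ^ 2 + (n4 : ℂ) * ξ‖ + ‖(n5 : ℂ)‖ :=
          norm_add_le _ _
      _ ≤ (‖(n1 : ℂ) * ξ ^ 4 + (n2 : ℂ) * ξ ^ 3 + (n3 : ℂ) * ξ ^ 2‖ + ‖(n4 : ℂ) * ξ‖) + ‖(n5 : ℂ)‖ :=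
          add_le_add_left (norm_add_le _ _) _
      _ ≤ ((‖(n1 : ℂ) * ξ ^ 4 + (n2 : ℂ) * ξ ^ 3‖ + ‖(n3 : ℂ) * ξ ^ 2‖) + ‖(n4 : ℂ) * ξ‖) + ‖(n5 : ℂ)‖ := by
          gcongr; exact norm_add_le _ _
      _ ≤ (((‖(n1 : ℂ) * ξ ^ 4‖ + ‖(n2 : ℂ) * ξ ^ 3‖) + ‖(n3 : ℂ) * ξ ^ 2‖) + ‖(n4 : ℂ) * ξ‖) + ‖(n5 : ℂ)‖ := by
          gcongr; exact norm_add_le _ _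
      _ = |n1| * a ^ 4 + |n2| * a ^ 3 + |n3| * a ^ 2 + |n4| * a + |n5| := by
          rw [ha]
          simp only [norm_mul, norm_pow, Complex.norm_real, Real.norm_eq_abs]
  have hAn : ‖(m1 : ℂ) * ξ ^ 4 + (m2 : ℂ) * ξ ^ 3 + (m3 : ℂ) * ξ ^ 2 + (m4 : ℂ) * ξ + (m5 : ℂ)‖
      ≤ |m1| * a ^ 4 + |m2| * a ^ 3 + |m3| * a ^ 2 + |m4| * a + |m5| := by
    calc ‖(m1 : ℂ) * ξ ^ 4 + (m2 : ℂ) * ξ ^ 3 + (m3 : ℂ) * ξ ^ 2 + (m4 : ℂ) * ξ + (m5 : ℂ)‖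
        ≤ ‖(m1 : ℂ) * ξ ^ 4 + (m2 : ℂ) * ξ ^ 3 + (m3 : ℂ) * ξ ^ 2 + (m4 : ℂ) * ξ‖ + ‖(m5 : ℂ)‖ :=
          norm_add_le _ _
      _ ≤ (‖(m1 : ℂ) * ξ ^ 4 + (m2 : ℂ) * ξ ^ 3 + (m3 : ℂ) * ξ ^ 2‖ + ‖(m4 : ℂ) * ξ‖) + ‖(m5 : ℂ)‖ :=
          add_le_add_left (norm_add_le _ _) _
      _ ≤ ((‖(m1 : ℂ) * ξ ^ 4 + (m2 : ℂ) * ξ ^ 3‖ + ‖(m3 : ℂ) * ξ ^ 2‖) + ‖(m4 : ℂ) * ξ‖) + ‖(m5 : ℂ)‖ := by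
          gcongr; exact norm_add_le _ _
      _ ≤ (((‖(m1 : ℂ) * ξ ^ 4‖ + ‖(m2 : ℂ) * ξ ^ 3‖) + ‖(m3 : ℂ) * ξ ^ 2‖) + ‖(m4 : ℂ) * ξ‖) + ‖(m5 : ℂ)‖ := by
          gcongr; exact norm_add_le _ _
      _ = |m1| * a ^ 4 + |m2| * a ^ 3 + |m3| * a ^ 2 + |m4| * a + |m5| := by
          rw [ha]
          simp only [norm_mul, norm_pow, Complex.norm_real, Real.norm_eq_abs]
  have hnorm : a ^ 5 ≤ (|m1| * a ^ 4 + |m2| * a ^ 3 + |m3| * a ^ 2 + |m4| * a + |m5|) +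
      (|n1| * a ^ 4 + |n2| * a ^ 3 + |n3| * a ^ 2 + |n4| * a + |n5|) := by
    have h1 : a ^ 5 = ‖ξ ^ 5‖ := by rw [norm_pow]
    rw [h1, h5, norm_neg]
    calc ‖((m1 : ℂ) * ξ ^ 4 + (m2 : ℂ) * ξ ^ 3 + (m3 : ℂ) * ξ ^ 2 + (m4 : ℂ) * ξ + (m5 : ℂ)) +
          Complex.exp (-ξ * (τ : ℂ)) *
            ((n1 : ℂ) * ξ ^ 4 + (n2 : ℂ) * ξ ^ 3 + (n3 : ℂ) * ξ ^ 2 + (n4 : ℂ) * ξ + (n5 : ℂ))‖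
        ≤ ‖(m1 : ℂ) * ξ ^ 4 + (m2 : ℂ) * ξ ^ 3 + (m3 : ℂ) * ξ ^ 2 + (m4 : ℂ) * ξ + (m5 : ℂ)‖ +
          ‖Complex.exp (-ξ * (τ : ℂ))‖ *
            ‖(n1 : ℂ) * ξ ^ 4 + (n2 : ℂ) * ξ ^ 3 + (n3 : ℂ) * ξ ^ 2 + (n4 : ℂ) * ξ + (n5 : ℂ)‖ := by
          refine (norm_add_le _ _).trans ?_
          rw [norm_mul]
      _ ≤ (|m1| * a ^ 4 + |m2| * a ^ 3 + |m3| * a ^ 2 + |m4| * a + |m5|) +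
          1 * (|n1| * a ^ 4 + |n2| * a ^ 3 + |n3| * a ^ 2 + |n4| * a + |n5|) := by
          have hP0 : (0:ℝ) ≤ ‖(n1 : ℂ) * ξ ^ 4 + (n2 : ℂ) * ξ ^ 3 + (n3 : ℂ) * ξ ^ 2 + (n4 : ℂ) * ξ + (n5 : ℂ)‖ :=
            norm_nonneg _
          have := mul_le_mul hE hPn hP0 (by norm_num)
          linarith [hAn]
      _ = (|m1| * a ^ 4 + |m2| * a ^ 3 + |m3| * a ^ 2 + |m4| * a + |m5|) +
          (|n1| * a ^ 4 + |n2| * a ^ 3 + |n3| * a ^ 2 + |n4| * a + |n5|) := by ring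
  -- now derive contradiction
  have e1 : a ≤ a ^ 4 := le_self_pow₀ ha1 (by norm_num)
  have e2 : a ^ 2 ≤ a ^ 4 := pow_le_pow_right₀ ha1 (by norm_num)
  have e3 : a ^ 3 ≤ a ^ 4 := pow_le_pow_right₀ ha1 (by norm_num)
  have e4 : (1:ℝ) ≤ a ^ 4 := by
    calc (1:ℝ) = 1 ^ 4 := by norm_num
    _ ≤ a ^ 4 := pow_le_pow_left₀ (by norm_num) ha1 4
  have ha4 : (0:ℝ) < a ^ 4 := by positivity
  have hsum : a ^ 5 ≤ (MM - 1) * a ^ 4 := by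
    have b1 := mul_le_mul_of_nonneg_left e3 (abs_nonneg m2)
    have b2 := mul_le_mul_of_nonneg_left e2 (abs_nonneg m3)
    have b3 := mul_le_mul_of_nonneg_left e1 (abs_nonneg m4)
    have b4 := mul_le_mul_of_nonneg_left e4 (abs_nonneg m5)
    have c1 := mul_le_mul_of_nonneg_left e3 (abs_nonneg n2)
    have c2 := mul_le_mul_of_nonneg_left e2 (abs_nonneg n3)
    have c3 := mul_le_mul_of_nonneg_left e1 (abs_nonneg n4)
    have c4 := mul_le_mul_of_nonneg_left e4 (abs_nonneg n5)
    rw [hMM]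
    nlinarith [hnorm]
  have h5a : a ^ 5 = a * a ^ 4 := by ring
  have : a ≤ MM - 1 := by
    have := hsum
    rw [h5a] at this
    exact le_of_mul_le_mul_right this ha4
  linarith

end aux

set_option maxHeartbeats 1000000 in
theorem stmt15 (m1 m2 m3 m4 m5 n1 n2 n3 n4 n5 : ℝ)
    (ψ : ℂ → ℝ → ℂ)
    (hψ : ∀ (ξ : ℂ) (τ2 : ℝ), ψ ξ τ2 =
        ξ ^ 5 + (m1 : ℂ) * ξ ^ 4 + (m2 : ℂ) * ξ ^ 3 + (m3 : ℂ) * ξ ^ 2 +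
          (m4 : ℂ) * ξ + (m5 : ℂ) +
          Complex.exp (-ξ * (τ2 : ℂ)) *
            ((n1 : ℂ) * ξ ^ 4 + (n2 : ℂ) * ξ ^ 3 + (n3 : ℂ) * ξ ^ 2 + (n4 : ℂ) * ξ + (n5 : ℂ)))
    (hstable0 : ∀ ξ : ℂ, ψ ξ 0 = 0 → ξ.re < 0)
    (hconst : m5 + n5 ≠ 0)
    (T : ℝ) (hT : 0 < T)
    (hnoim : ∀ τ : ℝ, 0 ≤ τ → τ < T → ∀ ω : ℝ, 0 < ω → ψ ((ω : ℂ) * Complex.I) τ ≠ 0) :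
    ∀ τ : ℝ, 0 ≤ τ → τ < T → ∀ ξ : ℂ, ψ ξ τ = 0 → ξ.re < 0 := by
  intro τ0 hτ00 hτ0T ξ0 hroot0
  by_contra hre0
  push_neg at hre0
  set F := auxF m1 m2 m3 m4 m5 n1 n2 n3 n4 n5 with hFdef
  have hψF : ∀ (ξ : ℂ) (τ : ℝ), ψ ξ τ = F τ ξ := fun ξ τ => by rw [hψ]; rfl
  set MM := 1 + (|m1| + |m2| + |m3| + |m4| + |m5| + |n1| + |n2| + |n3| + |n4| + |n5|) with hMMdef
  have hMM1 : (1:ℝ) ≤ MM := by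
    have := abs_nonneg m1; have := abs_nonneg m2; have := abs_nonneg m3
    have := abs_nonneg m4; have := abs_nonneg m5; have := abs_nonneg n1
    have := abs_nonneg n2; have := abs_nonneg n3; have := abs_nonneg n4
    have := abs_nonneg n5
    rw [hMMdef]; linarith
  have hbound : ∀ {τ : ℝ} {ξ : ℂ}, 0 ≤ τ → 0 ≤ ξ.re → F τ ξ = 0 → ‖ξ‖ ≤ MM :=
    fun hτ hre hz => auxF_bound m1 m2 m3 m4 m5 n1 n2 n3 n4 n5 hτ hre hz
  -- no roots on the imaginary axis for τ ∈ [0, T)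
  have hnoim' : ∀ τ : ℝ, 0 ≤ τ → τ < T → ∀ ξ : ℂ, F τ ξ = 0 → ξ.re ≠ 0 := by
    intro τ h0 hT' ξ hz hre
    have hξ : ξ = (ξ.im : ℂ) * Complex.I := by
      apply Complex.ext <;> simp [hre]
    rcases lt_trichotomy ξ.im 0 with him | him | him
    · have hconj : F τ (starRingEnd ℂ ξ) = 0 := by
        rw [hFdef, auxF_conj, ← hFdef, hz, map_zero]
      have heq : starRingEnd ℂ ξ = ((-ξ.im : ℝ) : ℂ) * Complex.I := by
        rw [hξ]
        simp [map_mul, Complex.conj_ofReal, Complex.conj_I]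
      exact hnoim τ h0 hT' (-ξ.im) (by linarith)
        (by rw [hψF, ← heq]; exact hconj)
    · have hξ0 : ξ = 0 := by
        apply Complex.ext <;> simp [hre, him]
      rw [hξ0, hFdef] at hz
      unfold auxF auxP at hz
      norm_num at hz
      exact hconst (by exact_mod_cast hz)
    · exact hnoim τ h0 hT' ξ.im him (by rw [hψF, ← hξ]; exact hz)
  have hstable0' : ∀ ξ : ℂ, F 0 ξ = 0 → ξ.re < 0 :=
    fun ξ h => hstable0 ξ (by rw [hψF]; exact h)
  -- the compact set of possible unstable roots
  set KK : Set ℂ := closedBall (0:ℂ) MM ∩ {z : ℂ | 0 ≤ z.re} with hKKdef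
  have hKKc : IsCompact KK :=
    (isCompact_closedBall _ _).inter_right (isClosed_le continuous_const Complex.continuous_re)
  set S : Set ℝ := {t | t ∈ Icc 0 τ0 ∧ ∃ ζ, ζ ∈ KK ∧ F t ζ = 0} with hSdef
  have hb0 : ‖ξ0‖ ≤ MM := hbound hτ00 hre0 (by rw [← hψF]; exact hroot0)
  have hS0 : τ0 ∈ S :=
    ⟨⟨hτ00, le_refl _⟩, ξ0, ⟨mem_closedBall_zero_iff.2 hb0, hre0⟩, by rw [← hψF]; exact hroot0⟩
  have hSne : S.Nonempty := ⟨τ0, hS0⟩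
  have hSbdd : BddBelow S := ⟨0, fun t ht => ht.1.1⟩
  set σ := sInf S with hσdef
  have hσ0 : 0 ≤ σ := le_csInf hSne (fun t ht => ht.1.1)
  have hστ0 : σ ≤ τ0 := csInf_le hSbdd hS0
  have hσT : σ < T := lt_of_le_of_lt hστ0 hτ0T
  -- there is a root at σ in KK, by compactness
  obtain ⟨u, -, hu_tendsto, hu_mem⟩ := exists_seq_tendsto_sInf hSne hSbdd
  choose ζ hζK hζ0 using fun n => (hu_mem n).2
  obtain ⟨ζs, hζsK, φ, hφ, hζtend⟩ := hKKc.tendsto_subseq hζK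
  have hcont := auxF_cont m1 m2 m3 m4 m5 n1 n2 n3 n4 n5
  have hσroot : F σ ζs = 0 := by
    have h1 : Tendsto (fun n => (ζ (φ n), u (φ n))) atTop (𝓝 (ζs, σ)) :=
      hζtend.prodMk_nhds (hu_tendsto.comp hφ.tendsto_atTop)
    have h2 := (hcont.tendsto (ζs, σ)).comp h1
    have h2' : Tendsto (fun _ : ℕ => (0:ℂ)) atTop
        (𝓝 ((fun p : ℂ × ℝ => F p.2 p.1) (ζs, σ))) :=
      h2.congr (fun n => hζ0 (φ n))
    exact (tendsto_nhds_unique tendsto_const_nhds h2').symm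
  have hζsre : 0 < ζs.re :=
    lt_of_le_of_ne hζsK.2 (Ne.symm (hnoim' σ hσ0 hσT ζs hσroot))
  have hσpos : 0 < σ := by
    rcases eq_or_lt_of_le hσ0 with h | h
    · exfalso
      have := hstable0' ζs (by rw [h]; exact hσroot)
      linarith
    · exact h
  -- F σ is analytic and not identically zero
  have hdiffσ : Differentiable ℂ (F σ) := auxF_diff m1 m2 m3 m4 m5 n1 n2 n3 n4 n5 σ
  have hFσanal : AnalyticOnNhd ℂ (F σ) univ := analyticOnNhd_univ_iff_differentiable.2 hdiffσ
  have hnot0 : F σ ((MM + 1 : ℝ) : ℂ) ≠ 0 := by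
    intro h
    have hre' : 0 ≤ (((MM + 1 : ℝ)) : ℂ).re := by simp; linarith
    have hble := hbound hσ0 hre' h
    rw [Complex.norm_real, Real.norm_eq_abs, abs_of_pos (by linarith)] at hble
    linarith
  obtain (hev | hev) := (hFσanal ζs (mem_univ _)).eventually_eq_zero_or_eventually_ne_zero
  · exact hnot0 (hFσanal.eqOn_zero_of_preconnected_of_eventuallyEq_zero isPreconnected_univ
      (mem_univ ζs) hev (mem_univ _))
  · -- isolated zero: find a radius with no other zeros
    rw [eventually_nhdsWithin_iff, Metric.eventually_nhds_iff] at hev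
    obtain ⟨r0, hr0, hr0prop⟩ := hev
    set r := min (r0 / 2) (ζs.re / 2) with hrdef
    have hrpos : 0 < r := lt_min (by linarith) (by linarith)
    have hrlt : r < r0 := lt_of_le_of_lt (min_le_left _ _) (by linarith)
    have hrre : r ≤ ζs.re / 2 := min_le_right _ _
    have hsne : (sphere ζs r).Nonempty := NormedSpace.sphere_nonempty.2 hrpos.le
    obtain ⟨z0, hz0s, hz0min⟩ := (isCompact_sphere ζs r).exists_isMinOn hsne
      ((continuous_norm.comp hdiffσ.continuous).continuousOn)
    set ε := ‖F σ z0‖ with hεdef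
    have hεpos : 0 < ε := by
      rw [hεdef, norm_pos_iff]
      apply hr0prop
      · rw [mem_sphere_iff_norm] at hz0s
        rw [dist_eq_norm, hz0s]
        exact hrlt
      · intro hmem
        rw [mem_singleton_iff] at hmem
        rw [mem_sphere_iff_norm, hmem] at hz0s
        simp at hz0s
        linarith
    -- tube lemma: uniform closeness for τ near σ
    set UU : Set (ℂ × ℝ) := {p | ‖F p.2 p.1 - F σ p.1‖ < ε / 2} with hUUdef
    have hUopen : IsOpen UU := by
      have hc2 : Continuous fun p : ℂ × ℝ => ‖F p.2 p.1 - F σ p.1‖ :=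
        (hcont.sub (hdiffσ.continuous.comp continuous_fst)).norm
      exact isOpen_lt hc2 continuous_const
    have hsub : (closedBall ζs r) ×ˢ ({σ} : Set ℝ) ⊆ UU := by
      rintro ⟨z, t⟩ ⟨_, ht⟩
      simp only [mem_singleton_iff] at ht
      simp only [hUUdef, mem_setOf_eq, ht, sub_self, norm_zero]
      positivity
    obtain ⟨v, w, hvo, hwo, hv, hw, hvw⟩ :=
      generalized_tube_lemma (isCompact_closedBall ζs r) isCompact_singleton hUopen hsub
    obtain ⟨δ, hδ, hδball⟩ := Metric.isOpen_iff.1 hwo σ (hw rfl)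
    set τ := σ - min (δ / 2) (σ / 2) with hτdef
    have hmpos : 0 < min (δ / 2) (σ / 2) := lt_min (by linarith) (by linarith)
    have hmle : min (δ / 2) (σ / 2) ≤ σ / 2 := min_le_right _ _
    have hτpos : 0 < τ := by rw [hτdef]; linarith
    have hτltσ : τ < σ := by rw [hτdef]; linarith
    have hτw : τ ∈ w := by
      apply hδball
      rw [mem_ball, Real.dist_eq, hτdef]
      have h1 : min (δ / 2) (σ / 2) ≤ δ / 2 := min_le_left _ _
      rw [abs_of_nonpos (by linarith)]
      linarith
    have hclose : ∀ z ∈ closedBall ζs r, ‖F τ z - F σ z‖ < ε / 2 := by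
      intro z hz
      have := hvw (Set.mk_mem_prod (hv hz) hτw)
      simpa [hUUdef] using this
    by_cases hzero : ∃ ζ1 ∈ closedBall ζs r, F τ ζ1 = 0
    · obtain ⟨ζ1, hζ1b, hζ1z⟩ := hzero
      have hre1 : 0 ≤ ζ1.re := by
        have hd : ‖ζ1 - ζs‖ ≤ r := by rwa [mem_closedBall, dist_eq_norm] at hζ1b
        have habs : |(ζ1 - ζs).re| ≤ ‖ζ1 - ζs‖ := by
          exact Complex.abs_re_le_norm _
        rw [Complex.sub_re, abs_le] at habs
        linarith
      have hb1 : ‖ζ1‖ ≤ MM := hbound hτpos.le hre1 hζ1z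
      have hτS : τ ∈ S :=
        ⟨⟨hτpos.le, le_trans hτltσ.le hστ0⟩, ζ1, ⟨mem_closedBall_zero_iff.2 hb1, hre1⟩, hζ1z⟩
      have := csInf_le hSbdd hτS
      rw [← hσdef] at this
      linarith
    · push_neg at hzero
      have hdiffτ : Differentiable ℂ (F τ) := auxF_diff m1 m2 m3 m4 m5 n1 n2 n3 n4 n5 τ
      have hdc : DiffContOnCl ℂ (fun z => (F τ z)⁻¹) (ball ζs r) := by
        refine ⟨(hdiffτ.differentiableOn).inv
          (fun z hz => hzero z (ball_subset_closedBall hz)), ?_⟩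
        rw [closure_ball ζs hrpos.ne']
        exact (hdiffτ.continuous.continuousOn).inv₀ (fun z hz => hzero z hz)
      have hfr : ∀ z ∈ frontier (ball ζs r), ‖(F τ z)⁻¹‖ ≤ (ε / 2)⁻¹ := by
        intro z hzf
        rw [frontier_ball ζs hrpos.ne'] at hzf
        have hzb : z ∈ closedBall ζs r := sphere_subset_closedBall hzf
        have h1 : ε ≤ ‖F σ z‖ := hz0min hzf
        have h2 : ‖F τ z - F σ z‖ < ε / 2 := hclose z hzb
        have h3 : ε / 2 ≤ ‖F τ z‖ := by
          have h4 : ‖F σ z‖ - ‖F τ z‖ ≤ ‖F σ z - F τ z‖ := norm_sub_norm_le _ _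
          rw [norm_sub_rev] at h4
          linarith
        rw [norm_inv]
        exact inv_anti₀ (by positivity) h3
      have hmax := Complex.norm_le_of_forall_mem_frontier_norm_le isBounded_ball hdc hfr
        (by rw [closure_ball ζs hrpos.ne']; exact mem_closedBall_self hrpos.le)
      have hne0 : F τ ζs ≠ 0 := hzero ζs (mem_closedBall_self hrpos.le)
      rw [norm_inv] at hmax
      have h5 : 0 < ‖F τ ζs‖ := norm_pos_iff.2 hne0
      have h4 : ε / 2 ≤ ‖F τ ζs‖ := (inv_le_inv₀ h5 (by positivity)).1 hmax
      have h6 : ‖F τ ζs‖ < ε / 2 := by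
        have := hclose ζs (mem_closedBall_self hrpos.le)
        rwa [hσroot, sub_zero] at this
      linarith
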